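/- arXiv:math/0701750 — 4 statements merged into one kernel-verified Lean document; each statement's English description precedes it below -/
import Mathlib

section
/- Let V = M_m(ℂ) × M_m(ℂ) with ω((A,B),(A',B')) = tr(A(B')^T − A'B^T). The subspace of V spanned by (Id, Id) together with all vectors (g^T + h, −(g + h^T)) for g, h traceless m×m matrices is Lagrangian with respect to ω, i.e. it is ω-isotropic of dimension m². -/
open Matrix

/-- The parametrizing linear map `M ↦ (M, ((2/m)·tr M)•1 − Mᵀ)`. -/
noncomputable def Lmap (m : ℕ) :
    Matrix (Fin m) (Fin m) ℂ →ₗ[ℂ]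
      (Matrix (Fin m) (Fin m) ℂ × Matrix (Fin m) (Fin m) ℂ) where
  toFun M := (M, ((2 / (m : ℂ)) * M.trace) • (1 : Matrix (Fin m) (Fin m) ℂ) - Mᵀ)
  map_add' M N := by
    refine Prod.ext rfl ?_
    simp [Matrix.trace_add, mul_add, add_smul, Matrix.transpose_add]
    abel
  map_smul' c M := by
    refine Prod.ext rfl ?_
    simp [Matrix.trace_smul, Matrix.transpose_smul, smul_sub, smul_smul, smul_eq_mul]
    ring_nf

lemma Lmap_inj (m : ℕ) : Function.Injective (Lmap m) := by
  intro M N h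
  exact congrArg Prod.fst h

/-- The subspace of `V = M_m(ℂ) × M_m(ℂ)` spanned by `(Id, Id)` together with all
`(gᵀ + h, −(g + hᵀ))` for traceless `g, h` is Lagrangian for
`ω((A,B),(A',B')) = tr(A B'ᵀ − A' Bᵀ)`: it is `ω`-isotropic of dimension `m²`. -/
theorem stmt4 (m : ℕ) :
    ∀ S : Submodule ℂ (Matrix (Fin m) (Fin m) ℂ × Matrix (Fin m) (Fin m) ℂ),
    S = Submodule.span ℂ
        ({((1 : Matrix (Fin m) (Fin m) ℂ), (1 : Matrix (Fin m) (Fin m) ℂ))} ∪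
          {p : Matrix (Fin m) (Fin m) ℂ × Matrix (Fin m) (Fin m) ℂ |
            ∃ g h : Matrix (Fin m) (Fin m) ℂ, g.trace = 0 ∧ h.trace = 0 ∧
              p = (gᵀ + h, -(g + hᵀ))}) →
    (∀ x ∈ S, ∀ y ∈ S, (x.1 * y.2ᵀ - y.1 * x.2ᵀ).trace = 0) ∧
      Module.finrank ℂ S = m ^ 2 := by
  intro S hS
  rcases Nat.eq_zero_or_pos m with hm | hm
  · subst hm
    constructor
    · intro x _ y _
      simp [Matrix.trace]
    · haveI : Subsingleton (Matrix (Fin 0) (Fin 0) ℂ × Matrix (Fin 0) (Fin 0) ℂ) :=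
        ⟨fun a b => by
          refine Prod.ext ?_ ?_ <;> · ext i j; exact i.elim0⟩
      haveI : Subsingleton S := ⟨fun a b => Subtype.ext (Subsingleton.elim _ _)⟩
      simp [Module.finrank_zero_of_subsingleton]
  · have hmC : (m : ℂ) ≠ 0 := Nat.cast_ne_zero.mpr hm.ne'
    -- S is the range of Lmap m
    have hrange : S = LinearMap.range (Lmap m) := by
      rw [hS]
      apply le_antisymm
      · rw [Submodule.span_le]
        rintro p (hp | hp)
        · rcases Set.mem_singleton_iff.mp hp with rfl
          refine ⟨1, ?_⟩
          refine Prod.ext rfl ?_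
          simp only [Lmap, LinearMap.coe_mk, AddHom.coe_mk, Matrix.trace_one,
            Matrix.transpose_one]
          rw [Fintype.card_fin]
          rw [div_mul_cancel₀ 2 hmC]
          norm_num [two_smul]
        · obtain ⟨g, h, hg, hh, rfl⟩ := hp
          refine ⟨gᵀ + h, ?_⟩
          refine Prod.ext rfl ?_
          simp only [Lmap, LinearMap.coe_mk, AddHom.coe_mk, Matrix.trace_add,
            Matrix.trace_transpose, hg, hh, add_zero, mul_zero, zero_smul, zero_sub,
            Matrix.transpose_add, Matrix.transpose_transpose]
      · rintro p ⟨M, rfl⟩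
        set c : ℂ := M.trace / m with hc
        have h1 : ((1 : Matrix (Fin m) (Fin m) ℂ), (1 : Matrix (Fin m) (Fin m) ℂ)) ∈
            ({((1 : Matrix (Fin m) (Fin m) ℂ), (1 : Matrix (Fin m) (Fin m) ℂ))} ∪
              {p : Matrix (Fin m) (Fin m) ℂ × Matrix (Fin m) (Fin m) ℂ |
                ∃ g h : Matrix (Fin m) (Fin m) ℂ, g.trace = 0 ∧ h.trace = 0 ∧
                  p = (gᵀ + h, -(g + hᵀ))}) := Or.inl rfl
        have htr : (M - c • (1 : Matrix (Fin m) (Fin m) ℂ)).trace = 0 := by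
          simp only [Matrix.trace_sub, Matrix.trace_smul, Matrix.trace_one,
            Fintype.card_fin, smul_eq_mul, hc]
          field_simp
          simp
        have h2 : ((M - c • (1 : Matrix (Fin m) (Fin m) ℂ)),
              -(M - c • (1 : Matrix (Fin m) (Fin m) ℂ))ᵀ) ∈
            ({((1 : Matrix (Fin m) (Fin m) ℂ), (1 : Matrix (Fin m) (Fin m) ℂ))} ∪
              {p : Matrix (Fin m) (Fin m) ℂ × Matrix (Fin m) (Fin m) ℂ |
                ∃ g h : Matrix (Fin m) (Fin m) ℂ, g.trace = 0 ∧ h.trace = 0 ∧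
                  p = (gᵀ + h, -(g + hᵀ))}) := by
          refine Or.inr ⟨0, M - c • 1, by simp, htr, ?_⟩
          simp
        have key : Lmap m M = c • ((1 : Matrix (Fin m) (Fin m) ℂ),
              (1 : Matrix (Fin m) (Fin m) ℂ)) +
            ((M - c • (1 : Matrix (Fin m) (Fin m) ℂ)),
              -(M - c • (1 : Matrix (Fin m) (Fin m) ℂ))ᵀ) := by
          refine Prod.ext ?_ ?_
          · simp [Lmap]
          · simp only [Lmap, LinearMap.coe_mk, AddHom.coe_mk, Prod.snd_add,
              Prod.smul_snd, Matrix.transpose_sub, Matrix.transpose_smul,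
              Matrix.transpose_one, neg_sub, smul_smul]
            have : (2 / (m : ℂ)) * M.trace = 2 * c := by
              rw [hc]; field_simp
            rw [this]
            rw [two_mul, add_smul]
            abel
        rw [key]
        exact Submodule.add_mem _
          (Submodule.smul_mem _ _ (Submodule.subset_span h1))
          (Submodule.subset_span h2)
    constructor
    · rintro x hx y hy
      rw [hrange] at hx hy
      obtain ⟨M, rfl⟩ := hx
      obtain ⟨N, rfl⟩ := hy
      simp only [Lmap, LinearMap.coe_mk, AddHom.coe_mk, Matrix.transpose_sub,
        Matrix.transpose_smul, Matrix.transpose_one, Matrix.transpose_transpose,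
        Matrix.mul_sub, Matrix.mul_smul, Matrix.mul_one, Matrix.trace_sub,
        Matrix.trace_smul, smul_eq_mul]
      rw [Matrix.trace_mul_comm M N]
      ring
    · rw [hrange, LinearMap.finrank_range_of_inj (Lmap_inj m)]
      rw [Module.finrank_matrix]
      simp [pow_two]
end

section
/- Let G = SL_m(ℂ) × SL_m(ℂ) act on pairs of m×m matrices by (g,h)·(A,B) = (g^T A h, g^{-1} B (h^{-1})^T), and suppose k + l ≤ m with k + l < m. Then for any pair (A,B) with AB^T = B^T A = 0, rk A = k, rk B = l, there exists (g,h) ∈ G and a scalar such that (g,h)·(A,B) is a scalar multiple of the pair of diagonal matrices (diag(1,...,1,0,...,0), diag(0,...,0,1,...,1,0,...,0)) with k ones in the first matrix and l ones (in positions k+1,...,k+l) in the second. -/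
open Matrix Submodule LinearMap Module

section helpers

variable {V : Type*} [AddCommGroup V] [Module ℂ V]

lemma complEquivRange (f : V →ₗ[ℂ] V) (W : Submodule ℂ V) (hc : IsCompl (LinearMap.ker f) W) :
    ∃ e : W ≃ₗ[ℂ] LinearMap.range f, ∀ x : W, (e x : V) = f x := by
  set φ : W →ₗ[ℂ] LinearMap.range f :=
    LinearMap.codRestrict (LinearMap.range f) (f.domRestrict W)
      (fun x => LinearMap.mem_range_self f x.1) with hφ
  have hinj : Function.Injective φ := by
    rw [← LinearMap.ker_eq_bot]
    rw [eq_bot_iff]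
    rintro ⟨x, hxW⟩ hx
    have : f x = 0 := by
      exact congrArg Subtype.val (LinearMap.mem_ker.mp hx)
    have hxk : x ∈ (LinearMap.ker f) ⊓ W := ⟨this, hxW⟩
    rw [hc.inf_eq_bot] at hxk
    simpa [Submodule.mem_bot] using hxk
  have hsurj : Function.Surjective φ := by
    rintro ⟨y, z, rfl⟩
    have hz : z ∈ (LinearMap.ker f) ⊔ W := by rw [hc.sup_eq_top]; trivial
    obtain ⟨a, ha, b, hb, rfl⟩ := Submodule.mem_sup.mp hz
    refine ⟨⟨b, hb⟩, ?_⟩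
    ext
    simp [φ, LinearMap.mem_ker.mp ha]
    rfl
  exact ⟨LinearEquiv.ofBijective φ ⟨hinj, hsurj⟩, fun x => rfl⟩

lemma extendBasis [FiniteDimensional ℂ V] (U K : Submodule ℂ V) (hUK : U ≤ K)
    {a b : ℕ} (ha : finrank ℂ U = a) (hK : finrank ℂ K = a + b) (bU : Basis (Fin a) ℂ U) :
    ∃ bK : Basis (Fin a ⊕ Fin b) ℂ K, ∀ j, (bK (Sum.inl j) : V) = bU j := by
  set U' : Submodule ℂ K := U.comap K.subtype with hU'
  set eqv : U' ≃ₗ[ℂ] U := Submodule.comapSubtypeEquivOfLe hUK with heqv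
  obtain ⟨C, hC⟩ := U'.exists_isCompl
  have hdim : finrank ℂ U' + finrank ℂ C = finrank ℂ K := Submodule.finrank_add_eq_of_isCompl hC
  have hU'a : finrank ℂ U' = a := by rw [eqv.finrank_eq, ha]
  have hCb : finrank ℂ C = b := by omega
  set bC : Basis (Fin b) ℂ C := finBasisOfFinrankEq ℂ C hCb
  refine ⟨((bU.map eqv.symm).prod bC).map (Submodule.prodEquivOfIsCompl U' C hC), fun j => ?_⟩
  simp only [Basis.map_apply, Basis.prod_apply]
  simp only [Sum.elim_inl, Function.comp_apply, Basis.map_apply]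
  rw [Submodule.coe_prodEquivOfIsCompl']
  have hc := Submodule.comapSubtypeEquivOfLe_apply_coe hUK (eqv.symm (bU j))
  rw [heqv, eqv.apply_symm_apply] at hc
  simp only [LinearMap.inl_apply, ZeroMemClass.coe_zero, add_zero]
  exact hc.symm

lemma exists_basis_pair [FiniteDimensional ℂ V] {m k l : ℕ} (hm : finrank ℂ V = m)
    (hkl : k + l ≤ m) (f g : V →ₗ[ℂ] V)
    (hgf : ∀ x, g (f x) = 0) (hfg : ∀ x, f (g x) = 0)
    (hf : finrank ℂ (LinearMap.range f) = k) (hg : finrank ℂ (LinearMap.range g) = l) :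
    ∃ v w : Basis (Fin m) ℂ V,
      (∀ i : Fin m, f (v i) = if (i : ℕ) < k then w i else 0) ∧
      (∀ i : Fin m, g (w i) = if k ≤ (i : ℕ) ∧ (i : ℕ) < k + l then v i else 0) := by
  set r := m - (k + l) with hr
  have hrgf : LinearMap.range g ≤ LinearMap.ker f := by
    rintro x ⟨y, rfl⟩; exact LinearMap.mem_ker.mpr (hfg y)
  have hrfg : LinearMap.range f ≤ LinearMap.ker g := by
    rintro x ⟨y, rfl⟩; exact LinearMap.mem_ker.mpr (hgf y)
  have hrk : finrank ℂ (LinearMap.range f) + finrank ℂ (LinearMap.ker f) = m := by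
    rw [← hm]; exact LinearMap.finrank_range_add_finrank_ker f
  have hrk' : finrank ℂ (LinearMap.range g) + finrank ℂ (LinearMap.ker g) = m := by
    rw [← hm]; exact LinearMap.finrank_range_add_finrank_ker g
  have hKf : finrank ℂ (LinearMap.ker f) = l + r := by omega
  have hKg : finrank ℂ (LinearMap.ker g) = k + r := by omega
  set bf : Basis (Fin k) ℂ (LinearMap.range f) := finBasisOfFinrankEq ℂ _ hf with hbf
  set bg : Basis (Fin l) ℂ (LinearMap.range g) := finBasisOfFinrankEq ℂ _ hg with hbg
  obtain ⟨bKf, hbKf⟩ := extendBasis (LinearMap.range g) (LinearMap.ker f) hrgf hg hKf bg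
  obtain ⟨bKg, hbKg⟩ := extendBasis (LinearMap.range f) (LinearMap.ker g) hrfg hf hKg bf
  obtain ⟨Wf, hWf⟩ := (LinearMap.ker f).exists_isCompl
  obtain ⟨Wg, hWg⟩ := (LinearMap.ker g).exists_isCompl
  obtain ⟨ef, hef⟩ := complEquivRange f Wf hWf
  obtain ⟨eg, heg⟩ := complEquivRange g Wg hWg
  set bWf : Basis (Fin k) ℂ Wf := bf.map ef.symm with hbWf
  set bWg : Basis (Fin l) ℂ Wg := bg.map eg.symm with hbWg
  set v0 : Basis (Fin k ⊕ (Fin l ⊕ Fin r)) ℂ V :=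
    (bWf.prod bKf).map (Submodule.prodEquivOfIsCompl Wf (LinearMap.ker f) hWf.symm) with hv0
  set σ : ((Fin k ⊕ Fin r) ⊕ Fin l) ≃ (Fin k ⊕ (Fin l ⊕ Fin r)) :=
    (Equiv.sumAssoc (Fin k) (Fin r) (Fin l)).trans
      (Equiv.sumCongr (Equiv.refl _) (Equiv.sumComm _ _)) with hσ
  set w0 : Basis (Fin k ⊕ (Fin l ⊕ Fin r)) ℂ V :=
    (((bKg.prod bWg).map
      (Submodule.prodEquivOfIsCompl (LinearMap.ker g) Wg hWg)).reindex σ) with hw0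
  have hm' : k + (l + r) = m := by omega
  set e : (Fin k ⊕ (Fin l ⊕ Fin r)) ≃ Fin m :=
    ((Equiv.sumCongr (Equiv.refl (Fin k)) finSumFinEquiv).trans finSumFinEquiv).trans
      (finCongr hm') with he
  -- values of v0
  have hv0l : ∀ j : Fin k, v0 (Sum.inl j) = (bWf j : V) := by
    intro j
    simp [hv0, Basis.map_apply, Basis.prod_apply, Submodule.coe_prodEquivOfIsCompl']
  have hv0r : ∀ s : Fin l ⊕ Fin r, v0 (Sum.inr s) = (bKf s : V) := by
    intro s
    simp [hv0, Basis.map_apply, Basis.prod_apply, Submodule.coe_prodEquivOfIsCompl']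
  have hw0kl : ∀ j : Fin k, w0 (Sum.inl j) = (bKg (Sum.inl j) : V) := by
    intro j
    simp [hw0, Basis.reindex_apply, hσ, Basis.map_apply, Basis.prod_apply,
      Submodule.coe_prodEquivOfIsCompl']
  have hw0l : ∀ j : Fin l, w0 (Sum.inr (Sum.inl j)) = (bWg j : V) := by
    intro j
    simp [hw0, Basis.reindex_apply, hσ, Basis.map_apply, Basis.prod_apply,
      Submodule.coe_prodEquivOfIsCompl']
  have hw0r : ∀ j : Fin r, w0 (Sum.inr (Sum.inr j)) = (bKg (Sum.inr j) : V) := by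
    intro j
    simp [hw0, Basis.reindex_apply, hσ, Basis.map_apply, Basis.prod_apply,
      Submodule.coe_prodEquivOfIsCompl']
  -- coordinates of e
  have heval1 : ∀ j : Fin k, ((e (Sum.inl j) : Fin m) : ℕ) = (j : ℕ) := by
    intro j; simp [he]
  have heval2 : ∀ j : Fin l, ((e (Sum.inr (Sum.inl j)) : Fin m) : ℕ) = k + (j : ℕ) := by
    intro j; simp [he]
  have heval3 : ∀ j : Fin r, ((e (Sum.inr (Sum.inr j)) : Fin m) : ℕ) = k + (l + (j : ℕ)) := by
    intro j; simp [he]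
  set v : Basis (Fin m) ℂ V := v0.reindex e with hv
  set w : Basis (Fin m) ℂ V := w0.reindex e with hw
  have hve : ∀ s, v (e s) = v0 s := by
    intro s; rw [hv, Basis.reindex_apply, e.symm_apply_apply]
  have hwe : ∀ s, w (e s) = w0 s := by
    intro s; rw [hw, Basis.reindex_apply, e.symm_apply_apply]
  refine ⟨v, w, fun i => ?_, fun i => ?_⟩
  · obtain ⟨s, rfl⟩ : ∃ s, e s = i := ⟨e.symm i, e.apply_symm_apply i⟩
    rw [hve, hwe]
    match s with
    | Sum.inl j =>
      rw [if_pos (by rw [heval1 j]; exact j.2)]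
      rw [hv0l, hw0kl, hbKg, hbWf, Basis.map_apply, ← hef (ef.symm (bf j)),
        ef.apply_symm_apply]
    | Sum.inr (Sum.inl j) =>
      rw [if_neg (by rw [heval2 j]; omega)]
      rw [hv0r]
      exact LinearMap.mem_ker.mp (bKf (Sum.inl j)).2
    | Sum.inr (Sum.inr j) =>
      rw [if_neg (by rw [heval3 j]; omega)]
      rw [hv0r]
      exact LinearMap.mem_ker.mp (bKf (Sum.inr j)).2
  · obtain ⟨s, rfl⟩ : ∃ s, e s = i := ⟨e.symm i, e.apply_symm_apply i⟩
    rw [hve, hwe]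
    match s with
    | Sum.inl j =>
      rw [if_neg (by rw [heval1 j]; omega)]
      rw [hw0kl]
      exact LinearMap.mem_ker.mp (bKg (Sum.inl j)).2
    | Sum.inr (Sum.inl j) =>
      rw [if_pos (by rw [heval2 j]; omega)]
      rw [hw0l, hv0r, hbKf, hbWg, Basis.map_apply, ← heg (eg.symm (bg j)),
        eg.apply_symm_apply]
    | Sum.inr (Sum.inr j) =>
      rw [if_neg (by rw [heval3 j]; omega)]
      rw [hw0r]
      exact LinearMap.mem_ker.mp (bKg (Sum.inr j)).2

end helpers

open Matrix

/-- If `k + l < m` and `A Bᵀ = Bᵀ A = 0` with `rk A = k`, `rk B = l`, then some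
`(g,h) ∈ SL_m × SL_m` moves `(A,B)` (acting by `(gᵀ A h, g⁻¹ B (h⁻¹)ᵀ)`) to a nonzero
scalar multiple of the pair of diagonal matrices `(diag(1^k,0), diag(0^k,1^l,0))`. -/
theorem stmt10 (m k l : ℕ) (hkl : k + l < m)
    (A B : Matrix (Fin m) (Fin m) ℂ)
    (h1 : A * Bᵀ = 0) (h2 : Bᵀ * A = 0) (hA : A.rank = k) (hB : B.rank = l) :
    ∃ (g h : Matrix (Fin m) (Fin m) ℂ) (c : ℂ), g.det = 1 ∧ h.det = 1 ∧ c ≠ 0 ∧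
      gᵀ * A * h = c • Matrix.diagonal (fun i : Fin m => if (i : ℕ) < k then (1 : ℂ) else 0) ∧
      g⁻¹ * B * (h⁻¹)ᵀ =
        c • Matrix.diagonal (fun i : Fin m =>
          if k ≤ (i : ℕ) ∧ (i : ℕ) < k + l then (1 : ℂ) else 0) := by
  classical
  set D : Matrix (Fin m) (Fin m) ℂ :=
    Matrix.diagonal (fun i : Fin m => if (i : ℕ) < k then (1 : ℂ) else 0) with hD
  set E : Matrix (Fin m) (Fin m) ℂ :=
    Matrix.diagonal (fun i : Fin m =>
      if k ≤ (i : ℕ) ∧ (i : ℕ) < k + l then (1 : ℂ) else 0) with hE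
  set f : (Fin m → ℂ) →ₗ[ℂ] (Fin m → ℂ) := A.mulVecLin with hf0
  set g0 : (Fin m → ℂ) →ₗ[ℂ] (Fin m → ℂ) := Bᵀ.mulVecLin with hg0
  have hgf : ∀ x, g0 (f x) = 0 := by
    intro x
    simp only [hg0, hf0, Matrix.mulVecLin_apply]
    rw [Matrix.mulVec_mulVec, h2, Matrix.zero_mulVec]
  have hfg : ∀ x, f (g0 x) = 0 := by
    intro x
    simp only [hg0, hf0, Matrix.mulVecLin_apply]
    rw [Matrix.mulVec_mulVec, h1, Matrix.zero_mulVec]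
  have hm : finrank ℂ (Fin m → ℂ) = m := by simp
  have hfr : finrank ℂ (LinearMap.range f) = k := hA
  have hgr : finrank ℂ (LinearMap.range g0) = l := by
    rw [show finrank ℂ (LinearMap.range g0) = Bᵀ.rank from rfl, Matrix.rank_transpose, hB]
  obtain ⟨v, w, hv, hw⟩ := exists_basis_pair hm (le_of_lt hkl) f g0 hgf hfg hfr hgr
  set H : Matrix (Fin m) (Fin m) ℂ := Matrix.of (fun i j => v j i) with hH
  set P : Matrix (Fin m) (Fin m) ℂ := Matrix.of (fun i j => w j i) with hP
  have hHtm : H = (Pi.basisFun ℂ (Fin m)).toMatrix v := by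
    ext i j; simp [hH, Basis.toMatrix_apply]
  have hPtm : P = (Pi.basisFun ℂ (Fin m)).toMatrix w := by
    ext i j; simp [hP, Basis.toMatrix_apply]
  have hHinv : IsUnit H.det := by
    rw [hHtm]
    letI := (Pi.basisFun ℂ (Fin m)).invertibleToMatrix v
    exact (Matrix.isUnit_iff_isUnit_det _).mp (isUnit_of_invertible _)
  have hPinv : IsUnit P.det := by
    rw [hPtm]
    letI := (Pi.basisFun ℂ (Fin m)).invertibleToMatrix w
    exact (Matrix.isUnit_iff_isUnit_det _).mp (isUnit_of_invertible _)
  have key1 : A * H = P * D := by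
    ext i j
    have := congrFun (hv j) i
    simp only [hf0, Matrix.mulVecLin_apply, Matrix.mulVec, dotProduct] at this
    rw [Matrix.mul_apply, hD, Matrix.mul_diagonal]
    by_cases hj : (j : ℕ) < k
    · rw [if_pos hj] at this
      simp [hH, hP, this, hj]
    · rw [if_neg hj] at this
      simp only [Pi.zero_apply] at this
      simp [hH, hP, this, hj]
  have key2 : Bᵀ * P = H * E := by
    ext i j
    have := congrFun (hw j) i
    simp only [hg0, Matrix.mulVecLin_apply, Matrix.mulVec, dotProduct,
      Matrix.transpose_apply] at this
    rw [Matrix.mul_apply, hE, Matrix.mul_diagonal]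
    by_cases hj : k ≤ (j : ℕ) ∧ (j : ℕ) < k + l
    · rw [if_pos hj] at this
      simp [hH, hP, this, hj]
    · rw [if_neg hj] at this
      simp only [Pi.zero_apply] at this
      simp [hH, hP, this, hj]
  -- normalization
  set t : Fin m := ⟨m - 1, by omega⟩ with ht
  have htk : ¬ ((t : ℕ) < k) := by simp [ht]; omega
  have htkl : ¬ (k ≤ (t : ℕ) ∧ (t : ℕ) < k + l) := by simp [ht]; omega
  set Dd : Matrix (Fin m) (Fin m) ℂ :=
    Matrix.diagonal (fun j => if j = t then H.det⁻¹ else 1) with hDd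
  set Dp : Matrix (Fin m) (Fin m) ℂ :=
    Matrix.diagonal (fun j => if j = t then P.det⁻¹ else 1) with hDp
  set H' := H * Dd with hH'
  set P' := P * Dp with hP'
  have hdetH' : H'.det = 1 := by
    rw [hH', Matrix.det_mul, hDd, Matrix.det_diagonal]
    rw [Finset.prod_ite_eq' Finset.univ t (fun _ => H.det⁻¹)]
    simp [Field.mul_inv_cancel _ hHinv.ne_zero]
  have hdetP' : P'.det = 1 := by
    rw [hP', Matrix.det_mul, hDp, Matrix.det_diagonal]
    rw [Finset.prod_ite_eq' Finset.univ t (fun _ => P.det⁻¹)]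
    simp [Field.mul_inv_cancel _ hPinv.ne_zero]
  have hDdE : Dd * E = E := by
    rw [hDd, hE, Matrix.diagonal_mul_diagonal]
    refine congrArg Matrix.diagonal (funext fun j => ?_)
    rcases eq_or_ne j t with rfl | hj
    · simp [htkl]
    · simp [hj]
  have hDDd : D * Dd = D := by
    rw [hDd, hD, Matrix.diagonal_mul_diagonal]
    refine congrArg Matrix.diagonal (funext fun j => ?_)
    rcases eq_or_ne j t with rfl | hj
    · simp [htk]
    · simp [hj]
  have hDpD : Dp * D = D := by
    rw [hDp, hD, Matrix.diagonal_mul_diagonal]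
    refine congrArg Matrix.diagonal (funext fun j => ?_)
    rcases eq_or_ne j t with rfl | hj
    · simp [htk]
    · simp [hj]
  have hEDp : E * Dp = E := by
    rw [hDp, hE, Matrix.diagonal_mul_diagonal]
    refine congrArg Matrix.diagonal (funext fun j => ?_)
    rcases eq_or_ne j t with rfl | hj
    · simp [htkl]
    · simp [hj]
  have key1' : A * H' = P' * D := by
    rw [hH', hP', ← Matrix.mul_assoc, key1, Matrix.mul_assoc, Matrix.mul_assoc, hDDd, hDpD]
  have key2' : Bᵀ * P' = H' * E := by
    rw [hH', hP', ← Matrix.mul_assoc, key2, Matrix.mul_assoc, Matrix.mul_assoc, hEDp, hDdE]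
  have hH'u : IsUnit H'.det := by rw [hdetH']; exact isUnit_one
  have hP'u : IsUnit P'.det := by rw [hdetP']; exact isUnit_one
  refine ⟨(P'⁻¹)ᵀ, H', 1, ?_, hdetH', one_ne_zero, ?_, ?_⟩
  · rw [Matrix.det_transpose, Matrix.det_nonsing_inv, hdetP', Ring.inverse_one]
  · rw [Matrix.transpose_transpose, one_smul, Matrix.mul_assoc, key1', ← Matrix.mul_assoc,
      Matrix.nonsing_inv_mul _ hP'u, Matrix.one_mul]
  · rw [one_smul, ← Matrix.transpose_nonsing_inv, Matrix.nonsing_inv_nonsing_inv _ hP'u]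
    have heq : H'⁻¹ * (Bᵀ * P') = E := by
      rw [key2', ← Matrix.mul_assoc, Matrix.nonsing_inv_mul _ hH'u, Matrix.one_mul]
    have hT : (H'⁻¹ * (Bᵀ * P'))ᵀ = P'ᵀ * B * (H'⁻¹)ᵀ := by
      rw [Matrix.transpose_mul, Matrix.transpose_mul, Matrix.transpose_transpose]
    rw [← hT, heq, hE, Matrix.diagonal_transpose]
end

section
/- The map ℙ^1 × ℙ^1 × ℙ^1 → ℙ(M_2(ℂ) × M_2(ℂ)) sending ([μ_1,μ_2],[ν_1,ν_2],[ξ_1,ξ_2]) to the class of the pair of matrices (ξ_1·(μ_iν_j)_{ij}, ξ_2·((μ_2ν_2, −μ_2ν_1),(−μ_1ν_2, μ_1ν_1))) is a well-defined closed embedding whose image is contained in the set {[A,B] : AB^T = B^T A = 0, rk A ≤ 1, rk B ≤ 1}. -/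
open Matrix

private lemma lin2 (p q : ℂ × ℂ) (s r : ℂ) (hs : s ≠ 0) (hr : r ≠ 0)
    (h1 : s * p.1 = r * q.1) (h2 : s * p.2 = r * q.2) : ∃ a : ℂ, a ≠ 0 ∧ p = a • q := by
  refine ⟨r / s, div_ne_zero hr hs, ?_⟩
  have : p = (r / s * q.1, r / s * q.2) := by
    apply Prod.ext
    · field_simp; linear_combination h1
    · field_simp; linear_combination h2
  simpa [Prod.smul_def, smul_eq_mul] using this

private lemma pne (p : ℂ × ℂ) (hp : p ≠ 0) : p.1 ≠ 0 ∨ p.2 ≠ 0 := by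
  by_contra h
  push_neg at h
  exact hp (Prod.ext h.1 h.2)

/-- The Segre-type map `ℙ¹×ℙ¹×ℙ¹ → ℙ(M_2(ℂ) × M_2(ℂ))` given on homogeneous
coordinates by `A = ξ₁ (μᵢνⱼ)`, `B = ξ₂ ((μ₂ν₂, −μ₂ν₁),(−μ₁ν₂, μ₁ν₁))` is a
well-defined embedding (nonzero image, injective on projective classes) whose image is
contained in `X_deg(2,1) = {[A,B] : A Bᵀ = Bᵀ A = 0, rk A ≤ 1, rk B ≤ 1}`. -/
theorem stmt16 (μ ν ξ : ℂ × ℂ) (hμ : μ ≠ 0) (hν : ν ≠ 0) (hξ : ξ ≠ 0) :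
    ((ξ.1 • !![μ.1 * ν.1, μ.1 * ν.2; μ.2 * ν.1, μ.2 * ν.2],
        ξ.2 • !![μ.2 * ν.2, -(μ.2 * ν.1); -(μ.1 * ν.2), μ.1 * ν.1]) : Matrix (Fin 2) (Fin 2) ℂ × Matrix (Fin 2) (Fin 2) ℂ) ≠ 0 ∧
    (ξ.1 • !![μ.1 * ν.1, μ.1 * ν.2; μ.2 * ν.1, μ.2 * ν.2]) *
        (ξ.2 • !![μ.2 * ν.2, -(μ.2 * ν.1); -(μ.1 * ν.2), μ.1 * ν.1] : Matrix (Fin 2) (Fin 2) ℂ)ᵀ = 0 ∧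
    (ξ.2 • !![μ.2 * ν.2, -(μ.2 * ν.1); -(μ.1 * ν.2), μ.1 * ν.1] : Matrix (Fin 2) (Fin 2) ℂ)ᵀ *
        (ξ.1 • !![μ.1 * ν.1, μ.1 * ν.2; μ.2 * ν.1, μ.2 * ν.2]) = 0 ∧
    (ξ.1 • !![μ.1 * ν.1, μ.1 * ν.2; μ.2 * ν.1, μ.2 * ν.2] : Matrix (Fin 2) (Fin 2) ℂ).rank ≤ 1 ∧
    (ξ.2 • !![μ.2 * ν.2, -(μ.2 * ν.1); -(μ.1 * ν.2), μ.1 * ν.1] : Matrix (Fin 2) (Fin 2) ℂ).rank ≤ 1 ∧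
    (∀ μ' ν' ξ' : ℂ × ℂ, μ' ≠ 0 → ν' ≠ 0 → ξ' ≠ 0 →
      (∃ c : ℂ, c ≠ 0 ∧
        ((ξ'.1 • !![μ'.1 * ν'.1, μ'.1 * ν'.2; μ'.2 * ν'.1, μ'.2 * ν'.2],
            ξ'.2 • !![μ'.2 * ν'.2, -(μ'.2 * ν'.1); -(μ'.1 * ν'.2), μ'.1 * ν'.1])
              : Matrix (Fin 2) (Fin 2) ℂ × Matrix (Fin 2) (Fin 2) ℂ)
          = c • (ξ.1 • !![μ.1 * ν.1, μ.1 * ν.2; μ.2 * ν.1, μ.2 * ν.2],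
              ξ.2 • !![μ.2 * ν.2, -(μ.2 * ν.1); -(μ.1 * ν.2), μ.1 * ν.1])) →
      (∃ a : ℂ, a ≠ 0 ∧ μ' = a • μ) ∧ (∃ b : ℂ, b ≠ 0 ∧ ν' = b • ν) ∧
        (∃ d : ℂ, d ≠ 0 ∧ ξ' = d • ξ)) := by
  have hμ1 := pne μ hμ
  have hν1 := pne ν hν
  have hξ1 := pne ξ hξ
  refine ⟨?_, ?_, ?_, ?_, ?_, ?_⟩
  · -- nonzero
    intro h
    have h1 := congrArg Prod.fst h
    have h2 := congrArg Prod.snd h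
    simp only [Prod.fst_zero, Prod.snd_zero] at h1 h2
    have e00 := congrFun (congrFun h1 0) 0
    have e01 := congrFun (congrFun h1 0) 1
    have e10 := congrFun (congrFun h1 1) 0
    have e11 := congrFun (congrFun h1 1) 1
    have f00 := congrFun (congrFun h2 0) 0
    have f01 := congrFun (congrFun h2 0) 1
    have f10 := congrFun (congrFun h2 1) 0
    have f11 := congrFun (congrFun h2 1) 1
    simp only [Matrix.smul_apply, Matrix.of_apply, Matrix.cons_val', Matrix.cons_val_zero,
      Matrix.empty_val', Matrix.cons_val_fin_one, Matrix.cons_val_one, Matrix.head_cons,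
      Matrix.head_fin_const, smul_eq_mul, Matrix.zero_apply, mul_neg,
      neg_eq_zero] at e00 e01 e10 e11 f00 f01 f10 f11
    rcases hξ1 with hk | hk <;> rcases hμ1 with hm | hm <;> rcases hν1 with hn | hn
    · exact mul_ne_zero hk (mul_ne_zero hm hn) e00
    · exact mul_ne_zero hk (mul_ne_zero hm hn) e01
    · exact mul_ne_zero hk (mul_ne_zero hm hn) e10
    · exact mul_ne_zero hk (mul_ne_zero hm hn) e11
    · exact mul_ne_zero hk (mul_ne_zero hm hn) f11
    · exact mul_ne_zero hk (mul_ne_zero hm hn) f10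
    · exact mul_ne_zero hk (mul_ne_zero hm hn) f01
    · exact mul_ne_zero hk (mul_ne_zero hm hn) f00
  · have hT : (!![μ.2 * ν.2, -(μ.2 * ν.1); -(μ.1 * ν.2), μ.1 * ν.1] : Matrix (Fin 2) (Fin 2) ℂ)ᵀ
        = !![μ.2 * ν.2, -(μ.1 * ν.2); -(μ.2 * ν.1), μ.1 * ν.1] := by
      ext i j
      fin_cases i <;> fin_cases j <;> simp
    rw [Matrix.transpose_smul, hT]
    ext i j
    fin_cases i <;> fin_cases j <;>
      simp [Matrix.mul_apply, Fin.sum_univ_two] <;> ring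
  · have hT : (!![μ.2 * ν.2, -(μ.2 * ν.1); -(μ.1 * ν.2), μ.1 * ν.1] : Matrix (Fin 2) (Fin 2) ℂ)ᵀ
        = !![μ.2 * ν.2, -(μ.1 * ν.2); -(μ.2 * ν.1), μ.1 * ν.1] := by
      ext i j
      fin_cases i <;> fin_cases j <;> simp
    rw [Matrix.transpose_smul, hT]
    ext i j
    fin_cases i <;> fin_cases j <;>
      simp [Matrix.mul_apply, Fin.sum_univ_two] <;> ring
  · have hA : (ξ.1 • !![μ.1 * ν.1, μ.1 * ν.2; μ.2 * ν.1, μ.2 * ν.2] : Matrix (Fin 2) (Fin 2) ℂ)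
        = (!![ξ.1 * μ.1; ξ.1 * μ.2] : Matrix (Fin 2) (Fin 1) ℂ) * !![ν.1, ν.2] := by
      ext i j
      fin_cases i <;> fin_cases j <;> simp [Matrix.mul_apply] <;> ring
    rw [hA]
    exact le_trans (rank_mul_le_right _ _) (by simpa using rank_le_card_height (!![ν.1, ν.2] : Matrix (Fin 1) (Fin 2) ℂ))
  · have hB : (ξ.2 • !![μ.2 * ν.2, -(μ.2 * ν.1); -(μ.1 * ν.2), μ.1 * ν.1] : Matrix (Fin 2) (Fin 2) ℂ)
        = (!![ξ.2 * μ.2; -(ξ.2 * μ.1)] : Matrix (Fin 2) (Fin 1) ℂ) * !![ν.2, -ν.1] := by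
      ext i j
      fin_cases i <;> fin_cases j <;> simp [Matrix.mul_apply] <;> ring
    rw [hB]
    exact le_trans (rank_mul_le_right _ _) (by simpa using rank_le_card_height (!![ν.2, -ν.1] : Matrix (Fin 1) (Fin 2) ℂ))
  · rintro μ' ν' ξ' hμ' hν' hξ' ⟨c, hc, h⟩
    have h1 := congrArg Prod.fst h
    have h2 := congrArg Prod.snd h
    simp only [Prod.smul_fst, Prod.smul_snd] at h1 h2
    have e00 := congrFun (congrFun h1 0) 0
    have e01 := congrFun (congrFun h1 0) 1
    have e10 := congrFun (congrFun h1 1) 0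
    have e11 := congrFun (congrFun h1 1) 1
    have f00 := congrFun (congrFun h2 0) 0
    have f01 := congrFun (congrFun h2 0) 1
    have f10 := congrFun (congrFun h2 1) 0
    have f11 := congrFun (congrFun h2 1) 1
    simp only [Matrix.smul_apply, Matrix.of_apply, Matrix.cons_val', Matrix.cons_val_zero,
      Matrix.empty_val', Matrix.cons_val_fin_one, Matrix.cons_val_one, Matrix.head_cons,
      Matrix.head_fin_const, smul_eq_mul] at e00 e01 e10 e11 f00 f01 f10 f11
    have E : ∀ k i j : Fin 2, ![ξ'.1, ξ'.2] k * (![μ'.1, μ'.2] i * ![ν'.1, ν'.2] j)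
        = c * (![ξ.1, ξ.2] k * (![μ.1, μ.2] i * ![ν.1, ν.2] j)) := by
      intro k i j
      fin_cases k <;> fin_cases i <;> fin_cases j <;>
        simp only [Fin.mk_zero, Fin.mk_one, Fin.isValue, Matrix.cons_val_zero,
          Matrix.cons_val_one, Matrix.head_cons]
      · linear_combination e00
      · linear_combination e01
      · linear_combination e10
      · linear_combination e11
      · linear_combination f11
      · linear_combination -f10
      · linear_combination -f01
      · linear_combination f00
    obtain ⟨i0, hi0⟩ : ∃ i : Fin 2, ![μ.1, μ.2] i ≠ 0 := by
      rcases hμ1 with h | h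
      exacts [⟨0, by simpa using h⟩, ⟨1, by simpa using h⟩]
    obtain ⟨j0, hj0⟩ : ∃ j : Fin 2, ![ν.1, ν.2] j ≠ 0 := by
      rcases hν1 with h | h
      exacts [⟨0, by simpa using h⟩, ⟨1, by simpa using h⟩]
    obtain ⟨k0, hk0⟩ : ∃ k : Fin 2, ![ξ.1, ξ.2] k ≠ 0 := by
      rcases hξ1 with h | h
      exacts [⟨0, by simpa using h⟩, ⟨1, by simpa using h⟩]
    have hlhs : ![ξ'.1, ξ'.2] k0 * (![μ'.1, μ'.2] i0 * ![ν'.1, ν'.2] j0) ≠ 0 := by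
      rw [E k0 i0 j0]
      exact mul_ne_zero hc (mul_ne_zero hk0 (mul_ne_zero hi0 hj0))
    have hk0' : ![ξ'.1, ξ'.2] k0 ≠ 0 := fun h => hlhs (by rw [h, zero_mul])
    have hi0' : ![μ'.1, μ'.2] i0 ≠ 0 := fun h => hlhs (by rw [h, zero_mul, mul_zero])
    have hj0' : ![ν'.1, ν'.2] j0 ≠ 0 := fun h => hlhs (by rw [h, mul_zero, mul_zero])
    refine ⟨?_, ?_, ?_⟩
    · refine lin2 μ' μ (![ξ'.1, ξ'.2] k0 * ![ν'.1, ν'.2] j0)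
        (c * (![ξ.1, ξ.2] k0 * ![ν.1, ν.2] j0))
        (mul_ne_zero hk0' hj0') (mul_ne_zero hc (mul_ne_zero hk0 hj0)) ?_ ?_
      · have := E k0 0 j0
        simp only [Matrix.cons_val_zero] at this
        linear_combination this
      · have := E k0 1 j0
        simp only [Matrix.cons_val_one, Matrix.head_cons, Matrix.cons_val_zero] at this
        linear_combination this
    · refine lin2 ν' ν (![ξ'.1, ξ'.2] k0 * ![μ'.1, μ'.2] i0)
        (c * (![ξ.1, ξ.2] k0 * ![μ.1, μ.2] i0))
        (mul_ne_zero hk0' hi0') (mul_ne_zero hc (mul_ne_zero hk0 hi0)) ?_ ?_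
      · have := E k0 i0 0
        simp only [Matrix.cons_val_zero] at this
        linear_combination this
      · have := E k0 i0 1
        simp only [Matrix.cons_val_one, Matrix.head_cons, Matrix.cons_val_zero] at this
        linear_combination this
    · refine lin2 ξ' ξ (![μ'.1, μ'.2] i0 * ![ν'.1, ν'.2] j0)
        (c * (![μ.1, μ.2] i0 * ![ν.1, ν.2] j0))
        (mul_ne_zero hi0' hj0') (mul_ne_zero hc (mul_ne_zero hi0 hj0)) ?_ ?_
      · have := E 0 i0 j0
        simp only [Matrix.cons_val_zero] at this
        linear_combination this
      · have := E 1 i0 j0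
        simp only [Matrix.cons_val_one, Matrix.head_cons, Matrix.cons_val_zero] at this
        linear_combination this
end

section
/- For t ∈ ℂ*, the point [diag(t,1,t^{-1}), diag(t^{-1},1,t)] lies in {[g,(g^{-1})^T] : det g = 1} ⊂ ℙ(M_3(ℂ)×M_3(ℂ)), and as t → 0 the limit of [diag(t²,t,1), diag(1,t,t²)] (the same projective point after rescaling by t) is [E_{33}, E_{11}], a point with AB^T = B^T A = 0, rk A = rk B = 1. Hence the closure of {[g,(g^{-1})^T] : det g = 1} contains a point of DEG³_{1,1}. -/
open Matrix

lemma diag001 : Matrix.diagonal ![(0:ℂ), 0, 1] = Matrix.single (2 : Fin 3) (2 : Fin 3) (1 : ℂ) := by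
  ext i j
  fin_cases i <;> fin_cases j <;> simp [Matrix.diagonal, Matrix.single]

lemma diag100 : Matrix.diagonal ![(1:ℂ), 0, 0] = Matrix.single (0 : Fin 3) (0 : Fin 3) (1 : ℂ) := by
  ext i j
  fin_cases i <;> fin_cases j <;> simp [Matrix.diagonal, Matrix.single]

lemma rank_e (i : Fin 3) : (Matrix.single i i (1 : ℂ)).rank = 1 := by
  have h : Matrix.single i i (1 : ℂ)
      = Matrix.diagonal (fun j => if j = i then (1:ℂ) else 0) := by
    fin_cases i <;> ext a b <;> fin_cases a <;> fin_cases b <;>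
      simp [Matrix.single, Matrix.diagonal]
  rw [h, Matrix.rank_diagonal]
  rw [Fintype.card_eq_one_iff]
  refine ⟨⟨i, by simp⟩, ?_⟩
  rintro ⟨j, hj⟩
  simp only [ne_eq, ite_eq_right_iff, not_forall] at hj
  simp [hj.1]

/-- The curve `t ↦ [diag(t²,t,1), diag(1,t,t²)]` lies in `INV³ = {[g,(g⁻¹)ᵀ] : det g = 1}`
for `t ≠ 0` (indeed `[diag(t,1,t⁻¹),diag(t⁻¹,1,t)]` equals it after rescaling), and as
`t → 0` it converges to `(E₃₃, E₁₁)`, a point with `A Bᵀ = Bᵀ A = 0` and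
`rk A = rk B = 1`; hence the closure of `INV³` contains a point of `DEG³_{1,1}`. -/
theorem stmt17 :
    (∀ t : ℂ, t ≠ 0 → ∃ (g : Matrix (Fin 3) (Fin 3) ℂ) (c : ℂ), g.det = 1 ∧ c ≠ 0 ∧
        ((Matrix.diagonal ![t ^ 2, t, 1], Matrix.diagonal ![1, t, t ^ 2])
            : Matrix (Fin 3) (Fin 3) ℂ × Matrix (Fin 3) (Fin 3) ℂ)
          = c • (g, (g⁻¹)ᵀ)) ∧
    Filter.Tendsto
      (fun t : ℂ => ((Matrix.diagonal ![t ^ 2, t, 1], Matrix.diagonal ![1, t, t ^ 2])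
          : Matrix (Fin 3) (Fin 3) ℂ × Matrix (Fin 3) (Fin 3) ℂ))
      (nhdsWithin 0 {0}ᶜ)
      (nhds (Matrix.single (2 : Fin 3) (2 : Fin 3) (1 : ℂ),
        Matrix.single (0 : Fin 3) (0 : Fin 3) (1 : ℂ))) ∧
    Matrix.single (2 : Fin 3) (2 : Fin 3) (1 : ℂ) *
        (Matrix.single (0 : Fin 3) (0 : Fin 3) (1 : ℂ))ᵀ = 0 ∧
    (Matrix.single (0 : Fin 3) (0 : Fin 3) (1 : ℂ))ᵀ *
        Matrix.single (2 : Fin 3) (2 : Fin 3) (1 : ℂ) = 0 ∧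
    (Matrix.single (2 : Fin 3) (2 : Fin 3) (1 : ℂ)).rank = 1 ∧
    (Matrix.single (0 : Fin 3) (0 : Fin 3) (1 : ℂ)).rank = 1 := by
  refine ⟨?_, ?_, ?_, ?_, rank_e 2, rank_e 0⟩
  · intro t ht
    refine ⟨Matrix.diagonal ![t, 1, t⁻¹], t, ?_, ht, ?_⟩
    · simp [Matrix.det_diagonal, Fin.prod_univ_three, ht]
    · have hinv : (Matrix.diagonal ![t, 1, t⁻¹])⁻¹
          = Matrix.diagonal ![t⁻¹, 1, t] := by
        apply Matrix.inv_eq_right_inv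
        ext i j
        fin_cases i <;> fin_cases j <;>
          simp [Matrix.mul_apply, Fin.sum_univ_three, Matrix.diagonal, ht]
      rw [hinv, Matrix.diagonal_transpose, Prod.ext_iff]
      constructor <;> · ext i j
                        fin_cases i <;> fin_cases j <;>
                          simp [Matrix.diagonal, ht, sq]
  · have hc : Continuous (fun t : ℂ =>
        ((Matrix.diagonal ![t ^ 2, t, 1], Matrix.diagonal ![1, t, t ^ 2])
          : Matrix (Fin 3) (Fin 3) ℂ × Matrix (Fin 3) (Fin 3) ℂ)) := by
      apply Continuous.prodMk <;>
        · apply Continuous.matrix_diagonal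
          apply continuous_pi
          intro i
          fin_cases i <;> simp <;> fun_prop
    have := hc.tendsto 0
    have h0 : ((Matrix.diagonal ![(0:ℂ) ^ 2, 0, 1], Matrix.diagonal ![1, (0:ℂ), 0 ^ 2])
        : Matrix (Fin 3) (Fin 3) ℂ × Matrix (Fin 3) (Fin 3) ℂ)
        = (Matrix.single (2 : Fin 3) (2 : Fin 3) (1 : ℂ),
           Matrix.single (0 : Fin 3) (0 : Fin 3) (1 : ℂ)) := by
      rw [Prod.ext_iff]
      constructor <;> simp [← diag001, ← diag100]
    rw [h0] at this
    exact this.mono_left nhdsWithin_le_nhds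
  · ext i j
    fin_cases i <;> fin_cases j <;>
      simp [Matrix.mul_apply, Fin.sum_univ_three, Matrix.single]
  · ext i j
    fin_cases i <;> fin_cases j <;>
      simp [Matrix.mul_apply, Fin.sum_univ_three, Matrix.single]
end
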